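/- Let G be a proper interval graph with intervals ordered by left endpoints, let U be a k-dominating set, let C be a component of G[U] with intervals I_{j_1} < ... < I_{j_p} where p ≥ 2k, and let q ∈ {1, ..., p-2k+1}. Then every interval I of G not in {I_{j_1},...,I_{j_p}} with I_{j_{q+k-1}} < I < I_{j_{q+k}} intersects at least k intervals from the set {I_{j_q}, I_{j_{q+1}}, ..., I_{j_{q+2k-1}}}. -/

import Mathlib

/-- The intersection graph of a proper interval model. -/
def interGraph (n : ℕ) (a b : Fin n → ℝ) : SimpleGraph (Fin n) where
  Adj i j := i ≠ j ∧ (Set.Icc (a i) (b i) ∩ Set.Icc (a j) (b j)).Nonempty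
  symm := ⟨fun i j h => ⟨h.1.symm, Set.inter_comm _ _ ▸ h.2⟩⟩
  loopless := ⟨fun i h => h.1 rfl⟩

/-- For a component of G[U] (U a k-dominating set) with intervals
I_{j 0} < ... < I_{j (p-1)}, p ≥ 2k, and a window of 2k consecutive intervals
starting at position q, every interval of G outside the component lying strictly
between the two middle intervals of the window intersects at least k intervals
of the window. -/
theorem stmt_13 (n k p : ℕ) (hk : 0 < k) (a b : Fin n → ℝ) (hab : ∀ i, a i ≤ b i)
    (hmono : StrictMono a)
    (hproper : ∀ i j : Fin n, i ≠ j →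
      ¬(Set.Icc (a i) (b i) ⊆ Set.Icc (a j) (b j)))
    (U : Set (Fin n))
    (hdom : ∀ v : Fin n, v ∉ U →
      k ≤ {w | w ∈ U ∧ (interGraph n a b).Adj v w}.ncard)
    (j : Fin p → Fin n) (hjmono : StrictMono j)
    (hC : ∃ cc : ((interGraph n a b).induce U).ConnectedComponent,
      Set.range j = Subtype.val '' cc.supp)
    (hp : 2 * k ≤ p) (q : ℕ) (hq : q + 2 * k ≤ p) :
    ∀ i : Fin n, i ∉ Set.range j →
      j ⟨q + k - 1, by omega⟩ < i → i < j ⟨q + k, by omega⟩ →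
      k ≤ {m : Fin p | q ≤ (m : ℕ) ∧ (m : ℕ) < q + 2 * k ∧
        (Set.Icc (a i) (b i) ∩ Set.Icc (a (j m)) (b (j m))).Nonempty}.ncard := by
  intro i hi hgt hltt
  obtain ⟨cc, hcc⟩ := hC
  have hbmono : StrictMono b := by
    intro x y hxy
    by_contra hcon
    push_neg at hcon
    exact hproper y x (ne_of_gt hxy) (Set.Icc_subset_Icc (hmono hxy).le hcon)
  have hcross_of : ∀ {x y : Fin n}, x < y →
      (Set.Icc (a x) (b x) ∩ Set.Icc (a y) (b y)).Nonempty → a y ≤ b x := by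
    rintro x y _ ⟨t, ⟨_, ht1⟩, ht2, _⟩
    exact ht2.trans ht1
  have hmk : ∀ {x y : Fin n}, x < y → a y ≤ b x →
      (Set.Icc (a x) (b x) ∩ Set.Icc (a y) (b y)).Nonempty :=
    fun {x y} hxy h => ⟨a y, ⟨(hmono hxy).le, h⟩, le_refl _, hab y⟩
  have hsupp_range : ∀ x : {v // v ∈ U}, x ∈ cc.supp → (x : Fin n) ∈ Set.range j :=
    fun x hx => hcc ▸ ⟨x, hx, rfl⟩
  have hget : ∀ m : Fin p, ∃ x : {v // v ∈ U}, x ∈ cc.supp ∧ (x : Fin n) = j m := by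
    intro m
    have h1 : j m ∈ Set.range j := ⟨m, rfl⟩
    rw [hcc] at h1
    obtain ⟨x, hx1, hx2⟩ := h1
    exact ⟨x, hx1, hx2⟩
  -- elements of supp over j ⟨q+k-1⟩ and j ⟨q+k⟩
  obtain ⟨x₀, hx₀s, hx₀v⟩ := hget ⟨q + k - 1, by omega⟩
  obtain ⟨x₁, hx₁s, hx₁v⟩ := hget ⟨q + k, by omega⟩
  -- adjacency in induced graph from adjacency in interGraph
  have inC : ∀ (v : Fin n) (hv : v ∈ U) (x : {w // w ∈ U}), x ∈ cc.supp →
      (interGraph n a b).Adj v ↑x → v ∈ Set.range j := by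
    intro v hv x hx hA
    have hadjG' : ((interGraph n a b).induce U).Adj ⟨v, hv⟩ x := hA
    exact hsupp_range ⟨v, hv⟩
      ((SimpleGraph.ConnectedComponent.mem_supp_iff _ _).mpr
        ((SimpleGraph.ConnectedComponent.sound hadjG'.reachable).trans
          ((SimpleGraph.ConnectedComponent.mem_supp_iff _ _).mp hx)))
  -- crossing pair: u = j m₀ < i < j m₁ = w with a (j m₁) ≤ b (j m₀)
  have key : ∀ (x y : {v // v ∈ U}) (W : ((interGraph n a b).induce U).Walk x y),
      ((interGraph n a b).induce U).connectedComponentMk x = cc →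
      (x : Fin n) < i → i < (y : Fin n) →
      ∃ m₀ m₁ : Fin p, j m₀ < i ∧ i < j m₁ ∧ a (j m₁) ≤ b (j m₀) := by
    intro x y W
    induction W with
    | nil => intro _ h1 h2; exact absurd (h1.trans h2) (lt_irrefl _)
    | @cons x x' y hadj W ih =>
      intro hcx hx hy
      have hcx' : ((interGraph n a b).induce U).connectedComponentMk x' = cc :=
        (SimpleGraph.ConnectedComponent.sound hadj.reachable).symm.trans hcx
      rcases lt_trichotomy (x' : Fin n) i with h | h | h
      · exact ih hcx' h hy
      · exact absurd (h ▸ hsupp_range x'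
          ((SimpleGraph.ConnectedComponent.mem_supp_iff _ _).mpr hcx')) hi
      · obtain ⟨m₀, hm₀⟩ := hsupp_range x
          ((SimpleGraph.ConnectedComponent.mem_supp_iff _ _).mpr hcx)
        obtain ⟨m₁, hm₁⟩ := hsupp_range x'
          ((SimpleGraph.ConnectedComponent.mem_supp_iff _ _).mpr hcx')
        have hadj' : (interGraph n a b).Adj ↑x ↑x' := hadj
        have hxx' : (x : Fin n) < (x' : Fin n) := hx.trans h
        exact ⟨m₀, m₁, hm₀ ▸ hx, hm₁ ▸ h, by
          rw [hm₀, hm₁]; exact hcross_of hxx' hadj'.2⟩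
  have hre : ((interGraph n a b).induce U).Reachable x₀ x₁ :=
    SimpleGraph.ConnectedComponent.exact
      (((SimpleGraph.ConnectedComponent.mem_supp_iff _ _).mp hx₀s).trans
        ((SimpleGraph.ConnectedComponent.mem_supp_iff _ _).mp hx₁s).symm)
  obtain ⟨W⟩ := hre
  obtain ⟨m₀, m₁, hm₀i, him₁, hcr⟩ := key x₀ x₁ W
    ((SimpleGraph.ConnectedComponent.mem_supp_iff _ _).mp hx₀s)
    (by rw [hx₀v]; exact hgt) (by rw [hx₁v]; exact hltt)
  obtain ⟨xu, hxus, hxuv⟩ := hget m₀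
  obtain ⟨xw, hxws, hxwv⟩ := hget m₁
  -- i is not in U
  have hiU : i ∉ U := by
    intro hmem
    have hA : (interGraph n a b).Adj (j m₀) i :=
      ⟨ne_of_lt hm₀i, hmk hm₀i ((hmono him₁).le.trans hcr)⟩
    exact hi (inC i hmem xu hxus (by rw [hxuv]; exact SimpleGraph.Adj.symm hA))
  -- index bounds for m₀ and m₁
  have hm₀lt : (m₀ : ℕ) < q + k := hjmono.lt_iff_lt.mp (hm₀i.trans hltt)
  have hm₁gt : q + k - 1 < (m₁ : ℕ) := hjmono.lt_iff_lt.mp (hgt.trans him₁)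
  -- every U-neighbor of i belongs to the component
  have hmemC : ∀ v, v ∈ U → (interGraph n a b).Adj i v → v ∈ Set.range j := by
    intro v hv hA
    rcases lt_trichotomy v i with hvi | hvi | hvi
    · have haibv : a i ≤ b v := hcross_of hvi hA.symm.2
      rcases lt_trichotomy v (j ⟨q + k - 1, by omega⟩) with h | h | h
      · exact inC v hv x₀ hx₀s (by
          rw [hx₀v]; exact ⟨ne_of_lt h, hmk h ((hmono hgt).le.trans haibv)⟩)
      · exact ⟨_, h.symm⟩
      · have hm₀le : j m₀ ≤ j ⟨q + k - 1, by omega⟩ :=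
          hjmono.monotone (by show (m₀ : ℕ) ≤ q + k - 1; omega)
        have huv : j m₀ < v := lt_of_le_of_lt hm₀le h
        have hav : a v ≤ b (j m₀) := ((hmono (hvi.trans him₁)).le).trans hcr
        exact inC v hv xu hxus (by
          rw [hxuv]
          exact SimpleGraph.Adj.symm (⟨ne_of_lt huv, hmk huv hav⟩ : (interGraph n a b).Adj (j m₀) v))
    · exact absurd hvi.symm hA.1
    · have havbi : a v ≤ b i := hcross_of hvi hA.2
      rcases lt_trichotomy v (j ⟨q + k, by omega⟩) with h | h | h
      · have hq_le : j ⟨q + k, by omega⟩ ≤ j m₁ :=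
          hjmono.monotone (by show q + k ≤ (m₁ : ℕ); omega)
        have hvw : v < j m₁ := h.trans_le hq_le
        have : a (j m₁) ≤ b v :=
          hcr.trans ((hbmono hm₀i).trans (hbmono hvi)).le
        exact inC v hv xw hxws (by rw [hxwv]; exact ⟨ne_of_lt hvw, hmk hvw this⟩)
      · exact ⟨_, h.symm⟩
      · have hav : a v ≤ b (j ⟨q + k, by omega⟩) := havbi.trans (hbmono hltt).le
        exact inC v hv x₁ hx₁s (by
          rw [hx₁v]
          exact SimpleGraph.Adj.symm
            (⟨ne_of_lt h, hmk h hav⟩ : (interGraph n a b).Adj (j ⟨q + k, by omega⟩) v))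
  -- generic counting lemma
  have himg : ∀ (T : Set (Fin p)) (f : Fin k → Fin p), Function.Injective f →
      (∀ t, f t ∈ T) → k ≤ T.ncard := by
    intro T f hf hfT
    have h1 : (Set.range f).ncard = k := by
      rw [← Set.image_univ, Set.ncard_image_of_injective _ hf, Set.ncard_univ,
        Nat.card_eq_fintype_card, Fintype.card_fin]
    rw [← h1]
    exact Set.ncard_le_ncard (Set.range_subset_iff.mpr hfT) (Set.toFinite T)
  by_cases hlow : ∃ m : Fin p, (m : ℕ) < q ∧
      (Set.Icc (a i) (b i) ∩ Set.Icc (a (j m)) (b (j m))).Nonempty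
  · obtain ⟨m, hmq, hint⟩ := hlow
    have hmi : j m < i :=
      lt_of_le_of_lt (hjmono.monotone (by show (m : ℕ) ≤ q + k - 1; omega)) hgt
    rw [Set.inter_comm] at hint
    have haibm : a i ≤ b (j m) := hcross_of hmi hint
    apply himg _ (fun t => ⟨q + (t : ℕ), by have := t.isLt; omega⟩)
    · intro s t hst
      have : q + (s : ℕ) = q + (t : ℕ) := congrArg Fin.val hst
      exact Fin.ext (by omega)
    · intro t
      have htk := t.isLt
      refine ⟨by simp, by simp; omega, ?_⟩
      have hmti : j ⟨q + (t : ℕ), by omega⟩ < i :=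
        lt_of_le_of_lt (hjmono.monotone (by show q + (t : ℕ) ≤ q + k - 1; omega)) hgt
      have hb : a i ≤ b (j ⟨q + (t : ℕ), by omega⟩) :=
        haibm.trans ((hbmono.monotone (hjmono.monotone
          (by show (m : ℕ) ≤ q + (t : ℕ); omega))))
      rw [Set.inter_comm]
      exact hmk hmti hb
  · by_cases hhigh : ∃ m : Fin p, q + 2 * k ≤ (m : ℕ) ∧
        (Set.Icc (a i) (b i) ∩ Set.Icc (a (j m)) (b (j m))).Nonempty
    · obtain ⟨m, hmq, hint⟩ := hhigh
      have him : i < j m :=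
        lt_of_lt_of_le hltt (hjmono.monotone (by show q + k ≤ (m : ℕ); omega))
      have hambi : a (j m) ≤ b i := hcross_of him hint
      apply himg _ (fun t => ⟨q + k + (t : ℕ), by have := t.isLt; omega⟩)
      · intro s t hst
        have : q + k + (s : ℕ) = q + k + (t : ℕ) := congrArg Fin.val hst
        exact Fin.ext (by omega)
      · intro t
        have htk := t.isLt
        refine ⟨by simp; omega, by simp; omega, ?_⟩
        have himt : i < j ⟨q + k + (t : ℕ), by omega⟩ :=
          lt_of_lt_of_le hltt (hjmono.monotone (by show q + k ≤ q + k + (t : ℕ); omega))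
        have hb : a (j ⟨q + k + (t : ℕ), by omega⟩) ≤ b i :=
          le_trans (hmono.monotone (hjmono.monotone
            (by show q + k + (t : ℕ) ≤ (m : ℕ); omega))) hambi
        exact hmk himt hb
    · have hsub : {w | w ∈ U ∧ (interGraph n a b).Adj i w} ⊆
          j '' {m : Fin p | q ≤ (m : ℕ) ∧ (m : ℕ) < q + 2 * k ∧
            (Set.Icc (a i) (b i) ∩ Set.Icc (a (j m)) (b (j m))).Nonempty} := by
        rintro v ⟨hvU, hvA⟩
        obtain ⟨m, rfl⟩ := hmemC v hvU hvA
        refine ⟨m, ⟨?_, ?_, hvA.2⟩, rfl⟩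
        · by_contra hcon
          exact hlow ⟨m, by omega, hvA.2⟩
        · by_contra hcon
          exact hhigh ⟨m, by omega, hvA.2⟩
      calc k ≤ {w | w ∈ U ∧ (interGraph n a b).Adj i w}.ncard := hdom i hiU
        _ ≤ (j '' {m : Fin p | q ≤ (m : ℕ) ∧ (m : ℕ) < q + 2 * k ∧
            (Set.Icc (a i) (b i) ∩ Set.Icc (a (j m)) (b (j m))).Nonempty}).ncard :=
          Set.ncard_le_ncard hsub (Set.toFinite _)
        _ = _ := Set.ncard_image_of_injective _ hjmono.injective
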